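/- With notation as in the previous lemma, the null space of H = D - F E^{-1} F^T equals the range of the dm x (m+d) matrix N whose i-th block row is [0 ... x_i ... 0, P(x_i)] (the vector x_i in the i-th column slot, followed by P(x_i)); moreover, N has full column rank m + d. -/

import Mathlib

open Matrix

/-- The orthogonal projection matrix `P(x) = I - x xᵀ / ‖x‖²`. -/
noncomputable def proj {d : ℕ} (x : Fin d → ℝ) : Matrix (Fin d) (Fin d) ℝ :=
  1 - (x ⬝ᵥ x)⁻¹ • Matrix.vecMulVec x x

lemma proj_mulVec {d : ℕ} (x v : Fin d → ℝ) :
    proj x *ᵥ v = v - ((x ⬝ᵥ x)⁻¹ * (x ⬝ᵥ v)) • x := by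
  funext a
  have : (vecMulVec x x *ᵥ v) a = (x ⬝ᵥ v) * x a := by
    simp [vecMulVec_apply, mulVec, dotProduct, Finset.mul_sum, Finset.sum_mul]
    exact Finset.sum_congr rfl fun b _ => by ring
  simp only [sub_mulVec, one_mulVec, smul_mulVec, proj,
    Pi.sub_apply, Pi.smul_apply, smul_eq_mul, this]
  ring

lemma proj_symm {d : ℕ} (x : Fin d → ℝ) (a b : Fin d) : proj x a b = proj x b a := by
  simp only [proj, Matrix.sub_apply, one_apply, Matrix.smul_apply, vecMulVec_apply, smul_eq_mul]
  by_cases h : a = b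
  · subst h; ring
  · rw [if_neg h, if_neg (Ne.symm h)]; ring

lemma proj_mulVec_self {d : ℕ} {x : Fin d → ℝ} (hx : x ≠ 0) : proj x *ᵥ x = 0 := by
  have h : x ⬝ᵥ x ≠ 0 := fun h => hx ((dotProduct_self_eq_zero).1 h)
  rw [proj_mulVec, inv_mul_cancel₀ h, one_smul, sub_self]

lemma proj_mulVec_smul_self {d : ℕ} {x : Fin d → ℝ} (hx : x ≠ 0) (c : ℝ) :
    proj x *ᵥ (c • x) = 0 := by
  rw [mulVec_smul, proj_mulVec_self hx, smul_zero]

lemma proj_eq_zero_iff {d : ℕ} {x : Fin d → ℝ} (hx : x ≠ 0) (v : Fin d → ℝ) :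
    proj x *ᵥ v = 0 ↔ ∃ c : ℝ, v = c • x := by
  constructor
  · intro h
    refine ⟨(x ⬝ᵥ x)⁻¹ * (x ⬝ᵥ v), ?_⟩
    have := proj_mulVec x v
    rw [h] at this
    exact sub_eq_zero.mp this.symm
  · rintro ⟨c, rfl⟩
    exact proj_mulVec_smul_self hx c

lemma dot_proj_self {d : ℕ} {x : Fin d → ℝ} (hx : x ≠ 0) (v : Fin d → ℝ) :
    v ⬝ᵥ (proj x *ᵥ v) = (proj x *ᵥ v) ⬝ᵥ (proj x *ᵥ v) := by
  have hx0 : x ⬝ᵥ (proj x *ᵥ v) = 0 := by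
    rw [proj_mulVec, dotProduct_sub, dotProduct_smul, smul_eq_mul]
    have h : x ⬝ᵥ x ≠ 0 := fun h => hx ((dotProduct_self_eq_zero).1 h)
    field_simp
    ring
  nth_rewrite 2 [proj_mulVec x v]
  rw [sub_dotProduct, smul_dotProduct, hx0, smul_zero, sub_zero]

lemma proj_idem {d : ℕ} {x : Fin d → ℝ} (hx : x ≠ 0) (v : Fin d → ℝ) :
    proj x *ᵥ (proj x *ᵥ v) = proj x *ᵥ v := by
  conv_lhs => rw [proj_mulVec x v]
  rw [mulVec_sub, proj_mulVec_smul_self hx, sub_zero]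

lemma dot_proj_zero {d : ℕ} {x : Fin d → ℝ} (hx : x ≠ 0) (v : Fin d → ℝ) :
    x ⬝ᵥ (proj x *ᵥ v) = 0 := by
  rw [proj_mulVec, dotProduct_sub, dotProduct_smul, smul_eq_mul]
  have h : x ⬝ᵥ x ≠ 0 := fun h => hx ((dotProduct_self_eq_zero).1 h)
  field_simp
  ring

lemma sum_mulVec' {n ι : Type*} [Fintype n] [Fintype ι] (A : ι → Matrix n n ℝ)
    (v : n → ℝ) : (∑ i, A i) *ᵥ v = ∑ i, A i *ᵥ v := by
  funext a
  simp only [mulVec, dotProduct, Finset.sum_apply, Matrix.sum_apply, Finset.sum_mul]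
  rw [Finset.sum_comm]

lemma E_ker {d m : ℕ} (x : Fin m → Fin d → ℝ) (hx : ∀ i, x i ≠ 0)
    (hnc : ¬ ∃ v : Fin d → ℝ, ∀ i, ∃ c : ℝ, x i = c • v)
    (v : Fin d → ℝ) (hv : (∑ i, proj (x i)) *ᵥ v = 0) : v = 0 := by
  by_contra hv0
  have hsum : ∑ i, v ⬝ᵥ (proj (x i) *ᵥ v) = 0 := by
    rw [sum_mulVec'] at hv
    calc ∑ i, v ⬝ᵥ proj (x i) *ᵥ v = v ⬝ᵥ ∑ i, proj (x i) *ᵥ v := by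
          simp [dotProduct, Finset.sum_apply, Finset.mul_sum]
          rw [Finset.sum_comm]
      _ = 0 := by rw [hv, dotProduct_zero]
  have hz : ∀ i ∈ Finset.univ, v ⬝ᵥ (proj (x i) *ᵥ v) = 0 := by
    rw [← Finset.sum_eq_zero_iff_of_nonneg]
    · exact hsum
    · intro i _
      rw [dot_proj_self (hx i)]
      exact Finset.sum_nonneg fun a _ => mul_self_nonneg _
  apply hnc
  refine ⟨v, fun i => ?_⟩
  have hpi : proj (x i) *ᵥ v = 0 := by
    have := hz i (Finset.mem_univ i)
    rw [dot_proj_self (hx i), dotProduct_self_eq_zero] at this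
    exact this
  obtain ⟨c, hc⟩ := (proj_eq_zero_iff (hx i) v).1 hpi
  have hc0 : c ≠ 0 := by rintro rfl; simp at hc; exact hv0 hc
  exact ⟨c⁻¹, by rw [hc, smul_smul, inv_mul_cancel₀ hc0, one_smul]⟩

lemma E_det {d m : ℕ} (x : Fin m → Fin d → ℝ) (hx : ∀ i, x i ≠ 0)
    (hnc : ¬ ∃ v : Fin d → ℝ, ∀ i, ∃ c : ℝ, x i = c • v) :
    IsUnit (∑ i, proj (x i)).det := by
  rw [← isUnit_iff_isUnit_det]
  rw [← mulVec_injective_iff_isUnit]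
  intro u w h
  have : (∑ i, proj (x i)) *ᵥ (u - w) = 0 := by
    rw [mulVec_sub, h, sub_self]
  have := E_ker x hx hnc _ this
  exact sub_eq_zero.mp this
theorem stmt5 {d m : ℕ} (x : Fin m → Fin d → ℝ) (hx : ∀ i, x i ≠ 0)
    (hnc : ¬ ∃ v : Fin d → ℝ, ∀ i, ∃ c : ℝ, x i = c • v)
    (D : Matrix (Fin m × Fin d) (Fin m × Fin d) ℝ)
    (hD : D = fun q r => if q.1 = r.1 then proj (x q.1) q.2 r.2 else 0)
    (F : Matrix (Fin m × Fin d) (Fin d) ℝ)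
    (hF : F = fun q b => proj (x q.1) q.2 b)
    (H : Matrix (Fin m × Fin d) (Fin m × Fin d) ℝ)
    (hH : H = D - F * (∑ i, proj (x i))⁻¹ * Fᵀ)
    (N : Matrix (Fin m × Fin d) (Fin m ⊕ Fin d) ℝ)
    (hN : N = fun q c =>
      Sum.elim (fun j => if q.1 = j then x q.1 q.2 else 0)
               (fun b => proj (x q.1) q.2 b) c) :
    (∀ z : Fin m × Fin d → ℝ,
      H *ᵥ z = 0 ↔ ∃ w : Fin m ⊕ Fin d → ℝ, N *ᵥ w = z) ∧
    N.rank = m + d := by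
  have hdet := E_det x hx hnc
  have hxx : ∀ i, x i ⬝ᵥ x i ≠ 0 := fun i h => hx i (dotProduct_self_eq_zero.1 h)
  have hD' : ∀ (z : Fin m × Fin d → ℝ) (i : Fin m) (a : Fin d),
      (D *ᵥ z) (i, a) = (proj (x i) *ᵥ fun b => z (i, b)) a := by
    intro z i a
    subst hD
    simp [mulVec, dotProduct, Fintype.sum_prod_type_right, ite_mul, zero_mul,
      Finset.sum_ite_eq]
  have hF' : ∀ (u : Fin d → ℝ) (i : Fin m) (a : Fin d),
      (F *ᵥ u) (i, a) = (proj (x i) *ᵥ u) a := by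
    intro u i a
    subst hF
    simp [mulVec, dotProduct]
  have hFT : ∀ (z : Fin m × Fin d → ℝ) (b : Fin d),
      (Fᵀ *ᵥ z) b = ∑ j, (proj (x j) *ᵥ fun a => z (j, a)) b := by
    intro z b
    subst hF
    simp only [mulVec, dotProduct, transpose_apply, Fintype.sum_prod_type]
    exact Finset.sum_congr rfl fun j _ => Finset.sum_congr rfl fun a _ => by
      rw [proj_symm]; rfl
  have hN' : ∀ (w : Fin m ⊕ Fin d → ℝ) (i : Fin m) (a : Fin d),
      (N *ᵥ w) (i, a) = w (Sum.inl i) * x i a + (proj (x i) *ᵥ (w ∘ Sum.inr)) a := by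
    intro w i a
    subst hN
    simp [mulVec, dotProduct, Fintype.sum_sum_type, ite_mul, zero_mul,
      Finset.sum_ite_eq, mul_comm]
  have hker : ∀ w : Fin m ⊕ Fin d → ℝ, N *ᵥ w = 0 → w = 0 := by
    intro w hw
    set v : Fin d → ℝ := w ∘ Sum.inr with hv
    have hblock : ∀ i : Fin m, w (Sum.inl i) • x i + proj (x i) *ᵥ v = 0 := by
      intro i
      funext a
      have := congrFun hw (i, a)
      rw [hN' w i a] at this
      simpa using this
    have hc0 : ∀ i, w (Sum.inl i) = 0 := by
      intro i
      have := congrArg (fun y => x i ⬝ᵥ y) (hblock i)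
      simp only [dotProduct_add, dotProduct_smul, dot_proj_zero (hx i),
        dotProduct_zero, add_zero, smul_eq_mul] at this
      exact (mul_eq_zero.1 this).resolve_right (hxx i)
    have hpv : ∀ i, proj (x i) *ᵥ v = 0 := by
      intro i
      have := hblock i
      rw [hc0 i, zero_smul, zero_add] at this
      exact this
    have hv0 : v = 0 := by
      apply E_ker x hx hnc
      rw [sum_mulVec']
      exact Finset.sum_eq_zero fun i _ => hpv i
    funext s
    cases s with
    | inl i => exact hc0 i
    | inr b => exact congrFun hv0 b
  constructor
  · intro z
    constructor
    · intro hz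
      set u : Fin d → ℝ := (∑ i, proj (x i))⁻¹ *ᵥ (Fᵀ *ᵥ z) with hu
      have hz' : ∀ (i : Fin m) (a : Fin d),
          (proj (x i) *ᵥ fun b => z (i, b)) a = (proj (x i) *ᵥ u) a := by
        intro i a
        rw [hH, sub_mulVec, ← mulVec_mulVec, ← mulVec_mulVec] at hz
        have := congrFun hz (i, a)
        simp only [Pi.sub_apply, Pi.zero_apply, hD' z i a, hF' _ i a] at this
        rw [← hu] at this
        linarith
      have hblock : ∀ i : Fin m, proj (x i) *ᵥ ((fun b => z (i, b)) - u) = 0 := by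
        intro i
        rw [mulVec_sub]
        funext a
        simp [hz' i a]
      choose c hc using fun i => (proj_eq_zero_iff (hx i) _).1 (hblock i)
      refine ⟨Sum.elim (fun i => c i + (x i ⬝ᵥ x i)⁻¹ * (x i ⬝ᵥ u)) u, ?_⟩
      funext q
      obtain ⟨i, a⟩ := q
      rw [hN']
      have h1 : (Sum.elim (fun i => c i + (x i ⬝ᵥ x i)⁻¹ * (x i ⬝ᵥ u)) u ∘ Sum.inr) = u := rfl
      rw [h1, proj_mulVec]
      have hca := congrFun (hc i) a
      simp only [Pi.sub_apply, Pi.smul_apply, smul_eq_mul, Sum.elim_inl] at hca ⊢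
      linarith [hca]
    · rintro ⟨w, rfl⟩
      set v : Fin d → ℝ := w ∘ Sum.inr with hv
      have h1 : ∀ i : Fin m, (proj (x i) *ᵥ fun b => (N *ᵥ w) (i, b)) = proj (x i) *ᵥ v := by
        intro i
        have : (fun b => (N *ᵥ w) (i, b)) = w (Sum.inl i) • x i + proj (x i) *ᵥ v := by
          funext b
          rw [hN' w i b]
          simp [hv]
        rw [this, mulVec_add, mulVec_smul, proj_mulVec_self (hx i), smul_zero, zero_add,
          proj_idem (hx i)]
      have h2 : Fᵀ *ᵥ (N *ᵥ w) = (∑ i, proj (x i)) *ᵥ v := by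
        funext b
        rw [hFT, sum_mulVec']
        simp only [Finset.sum_apply]
        exact Finset.sum_congr rfl fun j _ => by rw [h1 j]
      funext q
      obtain ⟨i, a⟩ := q
      rw [hH, sub_mulVec, ← mulVec_mulVec, ← mulVec_mulVec]
      simp only [Pi.sub_apply, Pi.zero_apply]
      rw [hD', h2, mulVec_mulVec, mulVec_mulVec, Matrix.mul_assoc, nonsing_inv_mul _ hdet,
        Matrix.mul_one, hF', h1 i]
      ring
  · have hinj : Function.Injective N.mulVecLin := by
      intro w1 w2 h
      have h0 : N *ᵥ (w1 - w2) = 0 := by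
        rw [mulVec_sub]
        simp only [mulVecLin_apply] at h
        rw [h, sub_self]
      exact sub_eq_zero.mp (hker _ h0)
    rw [Matrix.rank, LinearMap.finrank_range_of_inj hinj,
      Module.finrank_fintype_fun_eq_card, Fintype.card_sum, Fintype.card_fin, Fintype.card_fin]
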